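/- For every positive integer m, every natural number ν with 0 ≤ ν ≤ m−1, and every rational x, one has ∑_{k=0, k+m odd}^{m-1} C(m,k)·C(k+m,ν)·C(k+m−ν, m−ν−1)·B_{k+1}(x) = (1/2)·∑_{j=0}^{m} (−1)^{j+m}·C(m,j)·C(j+m−1,ν)·C(j+m−ν−1, m−ν−1)·(j+m)·x^j, where the sum on the left runs only over those indices k in {0,…,m−1} for which k+m is odd. -/

import Mathlib

open Finset

open Polynomial in
private def cc (m k : ℕ) : ℚ := (m.choose k : ℚ) * ((k + m).choose (m - 1))
open Polynomial in
private def ee (m j : ℕ) : ℚ := (-1 : ℚ) ^ (j + m) * (m.choose j) * (m * ((j + m).choose m))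

section AK
open Polynomial

lemma pascal_split (N : ℕ) (g : ℕ → ℚ) :
    ∑ s ∈ range (N + 2), (-1 : ℚ) ^ s * (N + 1).choose s * g s
      = (∑ s ∈ range (N + 1), (-1 : ℚ) ^ s * N.choose s * g s)
        - ∑ s ∈ range (N + 1), (-1 : ℚ) ^ s * N.choose s * g (s + 1) := by
  have h1 : ∑ s ∈ range (N + 2), (-1 : ℚ) ^ s * (N + 1).choose s * g s
      = (∑ s ∈ range (N + 1), (-1 : ℚ) ^ (s + 1) * ((N + 1).choose (s + 1)) * g (s + 1)) + g 0 := by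
    rw [Finset.sum_range_succ']; simp
  have h2 : ∑ s ∈ range (N + 1), (-1 : ℚ) ^ s * N.choose s * g s
      = (∑ s ∈ range N, (-1 : ℚ) ^ (s + 1) * (N.choose (s + 1)) * g (s + 1)) + g 0 := by
    rw [Finset.sum_range_succ']; simp
  have h3 : ∑ s ∈ range N, (-1 : ℚ) ^ (s + 1) * (N.choose (s + 1)) * g (s + 1)
      = ∑ s ∈ range (N + 1), (-1 : ℚ) ^ (s + 1) * (N.choose (s + 1)) * g (s + 1) := by
    rw [Finset.sum_range_succ, Nat.choose_succ_self]; simp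
  have h4 : ∀ s, (-1 : ℚ) ^ (s + 1) * ((N + 1).choose (s + 1)) * g (s + 1)
      = (-1 : ℚ) ^ (s + 1) * (N.choose (s + 1)) * g (s + 1)
        - (-1 : ℚ) ^ s * (N.choose s) * g (s + 1) := by
    intro s
    rw [Nat.choose_succ_succ]
    push_cast
    ring
  rw [h1, h2, h3]
  rw [Finset.sum_congr rfl fun s _ => h4 s, Finset.sum_sub_distrib]
  ring

lemma fd (q : ℕ) : ∀ N, N ≤ q → ∀ a : ℕ,
    ∑ s ∈ range (N + 1), (-1 : ℚ) ^ s * N.choose s * ((a + s).choose q)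
      = (-1) ^ N * (a.choose (q - N)) := by
  intro N
  induction N with
  | zero => intro _ a; simp
  | succ N ih =>
    intro hN a
    have hNq : N ≤ q := Nat.le_of_succ_le hN
    have hsplit := pascal_split N (fun s => ((a + s).choose q : ℚ))
    have h2 : ∑ s ∈ range (N + 1), (-1 : ℚ) ^ s * N.choose s * ((a + (s + 1)).choose q)
        = ∑ s ∈ range (N + 1), (-1 : ℚ) ^ s * N.choose s * (((a + 1) + s).choose q) := by
      apply Finset.sum_congr rfl; intro s _
      have h : a + (s + 1) = a + 1 + s := by omega
      rw [h]
    rw [show N + 1 + 1 = N + 2 from rfl, hsplit, h2, ih hNq a, ih hNq (a + 1)]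
    obtain ⟨t, ht⟩ : ∃ t, q - N = t + 1 := ⟨q - (N + 1), by omega⟩
    have hc : (a + 1).choose (t + 1) = a.choose t + a.choose (t + 1) := Nat.choose_succ_succ a t
    have ht2 : q - (N + 1) = t := by omega
    rw [ht, ht2, hc]
    push_cast
    ring

lemma fd_top (q a : ℕ) :
    ∑ s ∈ range (q + 2), (-1 : ℚ) ^ s * ((q + 1).choose s) * ((a + s).choose q) = 0 := by
  have hsplit := pascal_split q (fun s => ((a + s).choose q : ℚ))
  have h2 : ∑ s ∈ range (q + 1), (-1 : ℚ) ^ s * q.choose s * ((a + (s + 1)).choose q)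
      = ∑ s ∈ range (q + 1), (-1 : ℚ) ^ s * q.choose s * (((a + 1) + s).choose q) := by
    apply Finset.sum_congr rfl; intro s _
    have h : a + (s + 1) = a + 1 + s := by omega
    rw [h]
  rw [hsplit, h2, fd q q le_rfl a, fd q q le_rfl (a + 1), Nat.sub_self]
  simp

lemma Aid (m i : ℕ) (hi : i < m) :
    ∑ j ∈ Ico (i + 1) (m + 1), (-1 : ℚ) ^ (j + m) * (m.choose j) * (m * ((j + m).choose m)) * (j.choose i)
      = if Odd (i + m) then 2 * (i + 1) * (m.choose i) * ((i + m).choose (m - 1)) else 0 := by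
  set N := m - i with hN
  -- the key fd-derived sum
  have hfd := fd m N (by omega) (m + i)
  rw [Finset.sum_range_succ'] at hfd
  have hmN : m - N = i := by omega
  rw [hmN] at hfd
  simp only [pow_zero, Nat.choose_zero_right, Nat.cast_one, one_mul, add_zero] at hfd
  have hA : ∑ s ∈ range N, (-1 : ℚ) ^ (s + 1) * (N.choose (s + 1)) * ((m + i + 1 + s).choose m)
      = (-1) ^ N * ((m + i).choose i) - ((m + i).choose m) := by
    rw [eq_sub_iff_add_eq, ← hfd]
    congr 1
    apply Finset.sum_congr rfl; intro s _
    have h : m + i + (s + 1) = m + i + 1 + s := by omega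
    rw [h]
  -- rewrite the main sum termwise
  have hterm : ∀ j ∈ Ico (i + 1) (m + 1),
      (-1 : ℚ) ^ (j + m) * (m.choose j) * (m * ((j + m).choose m)) * (j.choose i)
        = ((m.choose i : ℚ) * m * (-1) ^ (i + m)) *
          ((-1 : ℚ) ^ ((j - i - 1) + 1) * (N.choose ((j - i - 1) + 1)) * ((m + i + 1 + (j - i - 1)).choose m)) := by
    intro j hj
    rw [Finset.mem_Ico] at hj
    have h1 : (m.choose j) * (j.choose i) = (m.choose i) * (N.choose (j - i)) := by
      rw [Nat.choose_mul (n := m) (k := j) (s := i) (by omega), hN]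
    have h2 : j - i - 1 + 1 = j - i := by omega
    have h3 : m + i + 1 + (j - i - 1) = j + m := by omega
    have h4 : (-1 : ℚ) ^ (j + m) = (-1) ^ (i + m) * (-1) ^ (j - i) := by
      rw [← pow_add]
      congr 1
      omega
    rw [h2, h3, h4]
    have h1q : (m.choose j : ℚ) * (j.choose i) = (m.choose i) * (N.choose (j - i)) := by
      exact_mod_cast congrArg (Nat.cast : ℕ → ℚ) h1
    linear_combination ((-1 : ℚ) ^ (i + m) * (-1) ^ (j - i) * m * (((j + m).choose m) : ℚ)) * h1q
  rw [Finset.sum_congr rfl hterm, ← Finset.mul_sum]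
  have hre : ∑ j ∈ Ico (i + 1) (m + 1),
      ((-1 : ℚ) ^ ((j - i - 1) + 1) * (N.choose ((j - i - 1) + 1)) * ((m + i + 1 + (j - i - 1)).choose m))
      = ∑ s ∈ range N, (-1 : ℚ) ^ (s + 1) * (N.choose (s + 1)) * ((m + i + 1 + s).choose m) := by
    rw [Finset.sum_Ico_eq_sum_range]
    have hlen : m + 1 - (i + 1) = N := by omega
    rw [hlen]
    apply Finset.sum_congr rfl; intro s _
    have : i + 1 + s - i - 1 = s := by omega
    rw [this]
  rw [hre, hA]
  have hsymm : ((m + i).choose m) = ((m + i).choose i) := by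
    have h := Nat.choose_symm (show i ≤ m + i by omega)
    rwa [show m + i - i = m from by omega] at h
  rw [hsymm]
  have habs : (i + 1) * ((i + m).choose (m - 1)) = m * ((m + i).choose i) := by
    have h1 : (i + m).choose (m - 1) = (m + i).choose (i + 1) := by
      have h := Nat.choose_symm (show i + 1 ≤ m + i by omega)
      rw [show m + i - (i + 1) = m - 1 from by omega] at h
      rw [show i + m = m + i from by omega]
      exact h
    have h2 := Nat.choose_succ_right_eq (m + i) i
    rw [show m + i - i = m from by omega] at h2
    rw [h1, Nat.mul_comm (i + 1), h2, Nat.mul_comm]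
  rcases Nat.even_or_odd (i + m) with he | ho
  · have hNe : Even N := by
      simp only [Nat.even_iff] at he ⊢
      omega
    rw [if_neg (by simp [Nat.not_odd_iff_even.mpr he]), he.neg_one_pow, hNe.neg_one_pow]
    ring
  · have hNo : Odd N := by
      simp only [Nat.odd_iff] at ho ⊢
      omega
    rw [if_pos ho, ho.neg_one_pow, hNo.neg_one_pow]
    have habsq : ((i : ℚ) + 1) * ((i + m).choose (m - 1)) = m * ((m + i).choose i) := by
      exact_mod_cast congrArg (Nat.cast : ℕ → ℚ) habs
    push_cast
    linear_combination (-2 * (m.choose i : ℚ)) * habsq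

lemma Cid (m : ℕ) (hm : 0 < m) :
    ∑ j ∈ range (m + 1), (-1 : ℚ) ^ (j + m) * (m.choose j) * (m * ((j + m).choose m)) * (1 / (j + 1))
      = 0 := by
  have hfd := fd_top m (m - 1)
  rw [Finset.sum_range_succ'] at hfd
  simp only [pow_zero, Nat.choose_zero_right, Nat.cast_one, one_mul, add_zero,
    Nat.choose_eq_zero_of_lt (by omega : m - 1 < m), Nat.cast_zero, mul_zero, add_zero] at hfd
  -- hfd : ∑ s ∈ range (m+1), (-1)^(s+1) * ((m+1).choose (s+1)) * ((m-1+(s+1)).choose m) = 0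
  have hterm : ∀ j ∈ range (m + 1),
      (-1 : ℚ) ^ (j + m) * (m.choose j) * (m * ((j + m).choose m)) * (1 / (j + 1))
        = ((-1 : ℚ) ^ m * m / (m + 1)) * (-1) ^ j * ((m + 1).choose (j + 1)) * ((j + m).choose m) := by
    intro j _
    have h1 : (m + 1) * (m.choose j) = ((m + 1).choose (j + 1)) * (j + 1) := Nat.add_one_mul_choose_eq m j
    have h1q : ((m : ℚ) + 1) * (m.choose j) = ((m + 1).choose (j + 1)) * (j + 1) := by
      exact_mod_cast congrArg (Nat.cast : ℕ → ℚ) h1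
    have hj1 : ((j : ℚ) + 1) ≠ 0 := by positivity
    have hm1 : ((m : ℚ) + 1) ≠ 0 := by positivity
    rw [pow_add]
    field_simp
    linear_combination (((j + m).choose m) : ℚ) * h1q
  rw [Finset.sum_congr rfl hterm]
  have : ∑ j ∈ range (m + 1),
      ((-1 : ℚ) ^ m * m / (m + 1)) * (-1) ^ j * ((m + 1).choose (j + 1)) * ((j + m).choose m)
      = (-(-1 : ℚ) ^ m * m / (m + 1)) *
        ∑ s ∈ range (m + 1), (-1 : ℚ) ^ (s + 1) * ((m + 1).choose (s + 1)) * ((m - 1 + (s + 1)).choose m) := by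
    rw [Finset.mul_sum]
    apply Finset.sum_congr rfl; intro s _
    have h : m - 1 + (s + 1) = s + m := by omega
    rw [h]
    ring
  rw [this, hfd, mul_zero]

lemma stepA (m : ℕ) (hm : 0 < m) (x : ℚ) :
    ∑ k ∈ (range m).filter (fun k => Odd (k + m)), cc m k * ((k + 1) * x ^ k)
      = (1 / 2) * ∑ j ∈ range (m + 1), ee m j * ((1 + x) ^ j - x ^ j) := by
  -- expand the binomial difference and swap sums
  have hbin : ∀ j ∈ range (m + 1), ee m j * ((1 + x) ^ j - x ^ j)
      = ∑ i ∈ range (m + 1), (if i < j then ee m j * (j.choose i) * x ^ i else 0) := by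
    intro j hj
    rw [mem_range] at hj
    have h1 : (1 + x) ^ j = ∑ i ∈ range (j + 1), x ^ i * 1 ^ (j - i) * (j.choose i) := by
      rw [add_comm]; exact add_pow x 1 j
    have h2 : (1 + x) ^ j - x ^ j = ∑ i ∈ range j, (j.choose i : ℚ) * x ^ i := by
      rw [h1, Finset.sum_range_succ, Nat.choose_self]
      simp only [one_pow, mul_one, Nat.cast_one]
      rw [add_sub_cancel_right]
      apply Finset.sum_congr rfl; intros; ring
    rw [h2, Finset.mul_sum, ← Finset.sum_filter,
      show (range (m + 1)).filter (fun i => i < j) = range j from by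
        ext a; simp only [mem_filter, mem_range]; omega]
    apply Finset.sum_congr rfl; intros; ring
  rw [Finset.sum_congr rfl hbin, Finset.sum_comm, Finset.mul_sum]
  -- rewrite LHS as a sum over range (m+1) with an indicator
  have hodd : ¬ Odd (m + m) := by rw [Nat.odd_iff]; omega
  rw [Finset.sum_filter]
  have hL : ∑ k ∈ range m, (if Odd (k + m) then cc m k * ((k + 1) * x ^ k) else 0)
      = ∑ k ∈ range (m + 1), (if Odd (k + m) then cc m k * ((k + 1) * x ^ k) else 0) := by
    rw [Finset.sum_range_succ, if_neg hodd, add_zero]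
  rw [hL]
  apply Finset.sum_congr rfl
  intro i hi
  rw [mem_range] at hi
  have hinner : ∑ j ∈ range (m + 1), (if i < j then ee m j * (j.choose i) * x ^ i else 0)
      = (∑ j ∈ Ico (i + 1) (m + 1), ee m j * (j.choose i)) * x ^ i := by
    rw [← Finset.sum_filter,
      show (range (m + 1)).filter (fun j => i < j) = Ico (i + 1) (m + 1) from by
        ext a; simp only [mem_filter, mem_range, mem_Ico]; omega,
      Finset.sum_mul]
  rw [hinner]
  rcases Nat.lt_or_ge i m with him | him
  · have hAid := Aid m i him
    have heq : ∑ j ∈ Ico (i + 1) (m + 1), ee m j * (j.choose i)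
        = if Odd (i + m) then 2 * (i + 1) * (m.choose i) * ((i + m).choose (m - 1)) else 0 := by
      rw [← hAid]
      apply Finset.sum_congr rfl; intros; simp only [ee]
    rw [heq]
    by_cases hoi : Odd (i + m)
    · rw [if_pos hoi, if_pos hoi]
      simp only [cc]
      push_cast
      ring
    · rw [if_neg hoi, if_neg hoi]
      ring
  · have hieq : i = m := by omega
    subst hieq
    rw [if_neg hodd, Finset.Ico_self, Finset.sum_empty]
    ring

lemma key (m : ℕ) (hm : 0 < m) :
    ∑ k ∈ (range m).filter (fun k => Odd (k + m)), C (cc m k) * Polynomial.bernoulli (k + 1)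
      = C (1 / 2 : ℚ) * ∑ j ∈ range (m + 1), C (ee m j) * X ^ j := by
  set Lp : ℚ[X] := ∑ k ∈ (range m).filter (fun k => Odd (k + m)), C (cc m k) * Polynomial.bernoulli (k + 1) with hLp
  set Rp : ℚ[X] := C (1 / 2 : ℚ) * ∑ j ∈ range (m + 1), C (ee m j) * X ^ j with hRp
  have hLdiff : ∀ x : ℚ, Lp.eval (1 + x) - Lp.eval x
      = ∑ k ∈ (range m).filter (fun k => Odd (k + m)), cc m k * ((k + 1) * x ^ k) := by
    intro x
    rw [hLp]
    simp only [eval_finset_sum, eval_mul, eval_C]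
    rw [← Finset.sum_sub_distrib]
    apply Finset.sum_congr rfl
    intro k _
    rw [Polynomial.bernoulli_eval_one_add (k + 1) x]
    push_cast
    ring
  have hRdiff : ∀ x : ℚ, Rp.eval (1 + x) - Rp.eval x
      = (1 / 2) * ∑ j ∈ range (m + 1), ee m j * ((1 + x) ^ j - x ^ j) := by
    intro x
    rw [hRp]
    simp only [eval_mul, eval_C, eval_finset_sum, eval_pow, eval_X]
    rw [← mul_sub, ← Finset.sum_sub_distrib]
    congr 1
    apply Finset.sum_congr rfl
    intro j _
    ring
  have hper : ∀ x : ℚ, (Lp - Rp).eval (1 + x) = (Lp - Rp).eval x := by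
    intro x
    simp only [eval_sub]
    have h1 := hLdiff x
    have h2 := hRdiff x
    have h3 := stepA m hm x
    linarith
  -- (Lp - Rp) is a constant polynomial
  set D : ℚ[X] := Lp - Rp with hD
  have hn : ∀ n : ℕ, D.eval (n : ℚ) = D.eval 0 := by
    intro n
    induction n with
    | zero => simp
    | succ n ih =>
      push_cast
      rw [show ((n : ℚ) + 1) = 1 + n by ring, hper (n : ℚ), ih]
  have hzero : D - C (D.eval 0) = 0 := by
    apply Polynomial.eq_zero_of_infinite_isRoot
    apply Set.infinite_of_injective_forall_mem (f := (Nat.cast : ℕ → ℚ)) Nat.cast_injective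
    intro n
    simp only [Set.mem_setOf_eq, IsRoot, eval_sub, eval_C]
    rw [hn n, sub_self]
  have hconst : D = C (D.eval 0) := by rwa [sub_eq_zero] at hzero
  -- pin the constant to 0 via antiderivatives
  set c0 : ℚ := D.eval 0 with hc0
  have hLR : Lp - Rp = C c0 := by rw [← hD]; exact hconst
  set Ip : ℚ[X] := ∑ k ∈ (range m).filter (fun k => Odd (k + m)),
    C (cc m k * (1 / (k + 2))) * Polynomial.bernoulli (k + 2) with hIp
  set Jp : ℚ[X] := C (1 / 2 : ℚ) * ∑ j ∈ range (m + 1),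
    C (ee m j * (1 / (j + 1))) * X ^ (j + 1) with hJp
  have hIder : derivative Ip = Lp := by
    rw [hIp, hLp, derivative_sum]
    apply Finset.sum_congr rfl
    intro k _
    rw [derivative_C_mul, Polynomial.derivative_bernoulli_add_one (k + 1)]
    have hne : ((k : ℚ) + 2) ≠ 0 := by positivity
    have hcast : ((k + 1 : ℕ) : ℚ[X]) + 1 = C ((k : ℚ) + 2) := by
      rw [← C_eq_natCast, ← C_1, ← C_add]
      congr 1
      push_cast
      ring
    rw [hcast, ← mul_assoc, ← C_mul, mul_assoc (cc m k), one_div_mul_cancel hne, mul_one]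
  have hJder : derivative Jp = Rp := by
    rw [hJp, hRp, derivative_C_mul, derivative_sum]
    congr 1
    apply Finset.sum_congr rfl
    intro j _
    rw [derivative_C_mul, derivative_X_pow]
    have hne : ((j : ℚ) + 1) ≠ 0 := by positivity
    have hcast : (((j + 1 : ℕ) : ℚ)) = (j : ℚ) + 1 := by push_cast; ring
    rw [Nat.add_sub_cancel, hcast, ← mul_assoc, ← C_mul, mul_assoc (ee m j),
      one_div_mul_cancel hne, mul_one]
  have hder0 : derivative (Ip - Jp - C c0 * X) = 0 := by
    rw [derivative_sub, derivative_sub, hIder, hJder, derivative_C_mul, derivative_X, mul_one]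
    rw [hLR]
    ring
  have hC := Polynomial.eq_C_of_derivative_eq_zero hder0
  have heval : (Ip - Jp - C c0 * X).eval 1 = (Ip - Jp - C c0 * X).eval 0 := by
    rw [hC]; simp
  simp only [eval_sub, eval_mul, eval_C, eval_X, mul_one, mul_zero, sub_zero] at heval
  have hIval : Ip.eval 1 = Ip.eval 0 := by
    rw [hIp]
    simp only [eval_finset_sum, eval_mul, eval_C]
    apply Finset.sum_congr rfl
    intro k _
    congr 1
    rw [Polynomial.bernoulli_eval_one, Polynomial.bernoulli_eval_zero,
      bernoulli_eq_bernoulli'_of_ne_one (by omega)]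
  have hJval : Jp.eval 1 - Jp.eval 0 = 0 := by
    rw [hJp]
    simp only [eval_mul, eval_C, eval_finset_sum, eval_pow, eval_X, one_pow, mul_one,
      zero_pow (Nat.succ_ne_zero _), mul_zero, Finset.sum_const_zero, sub_zero]
    have := Cid m hm
    rw [show ∑ j ∈ range (m + 1), ee m j * (1 / ((j : ℚ) + 1))
        = ∑ j ∈ range (m + 1), (-1 : ℚ) ^ (j + m) * (m.choose j) * (m * ((j + m).choose m)) * (1 / (j + 1)) from by
      apply Finset.sum_congr rfl; intros; simp only [ee]]
    rw [this, mul_zero]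
  have hc0val : c0 = 0 := by
    have : Ip.eval 1 - Jp.eval 1 - c0 = Ip.eval 0 - Jp.eval 0 := heval
    have h2 : Jp.eval 1 = Jp.eval 0 := by linarith [hJval]
    linarith [hIval]
  have hfin : Lp - Rp = 0 := by rw [hLR, hc0val, map_zero]
  exact sub_eq_zero.mp hfin

end AK

open Polynomial in
theorem alzer_kwong_extension_2 (m : ℕ) (hm : 0 < m) (ν : ℕ) (hν : ν + 1 ≤ m) (x : ℚ) :
    ∑ k ∈ (Finset.range m).filter (fun k => Odd (k + m)),
      (m.choose k : ℚ) * ((k + m).choose ν) * ((k + m - ν).choose (m - ν - 1)) *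
        (Polynomial.bernoulli (k + 1)).eval x
    = (1 / 2) * ∑ j ∈ Finset.range (m + 1),
        (-1 : ℚ) ^ (j + m) * (m.choose j) * ((j + m - 1).choose ν) *
          ((j + m - ν - 1).choose (m - ν - 1)) * (j + m) * x ^ j := by
  have hkeyx := congrArg (Polynomial.eval x) (key m hm)
  simp only [eval_finset_sum, eval_mul, eval_C, eval_pow, eval_X] at hkeyx
  have hLterm : ∀ k ∈ (Finset.range m).filter (fun k => Odd (k + m)),
      (m.choose k : ℚ) * ((k + m).choose ν) * ((k + m - ν).choose (m - ν - 1)) *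
        (Polynomial.bernoulli (k + 1)).eval x
      = ((m - 1).choose ν : ℚ) * (cc m k * (Polynomial.bernoulli (k + 1)).eval x) := by
    intro k _
    have hnat : (k + m).choose ν * ((k + m - ν).choose (m - ν - 1))
        = (m - 1).choose ν * ((k + m).choose (m - 1)) := by
      have h := Nat.choose_mul (n := k + m) (show ν ≤ m - 1 by omega)
      rw [show m - 1 - ν = m - ν - 1 from by omega] at h
      rw [← h, Nat.mul_comm]
    have hq : ((k + m).choose ν : ℚ) * ((k + m - ν).choose (m - ν - 1))
        = ((m - 1).choose ν : ℚ) * ((k + m).choose (m - 1)) := by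
      exact_mod_cast congrArg (Nat.cast : ℕ → ℚ) hnat
    simp only [cc]
    linear_combination ((m.choose k : ℚ) * (Polynomial.bernoulli (k + 1)).eval x) * hq
  have hRterm : ∀ j ∈ Finset.range (m + 1),
      (-1 : ℚ) ^ (j + m) * (m.choose j) * ((j + m - 1).choose ν) *
          ((j + m - ν - 1).choose (m - ν - 1)) * (j + m) * x ^ j
      = ((m - 1).choose ν : ℚ) * (ee m j * x ^ j) := by
    intro j _
    have h1 : (j + m - 1).choose ν * ((j + m - ν - 1).choose (m - ν - 1))
        = (m - 1).choose ν * ((j + m - 1).choose (m - 1)) := by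
      have h := Nat.choose_mul (n := j + m - 1) (show ν ≤ m - 1 by omega)
      rw [show m - 1 - ν = m - ν - 1 from by omega,
        show j + m - 1 - ν = j + m - ν - 1 from by omega] at h
      rw [← h, Nat.mul_comm]
    have h2 : (j + m) * ((j + m - 1).choose (m - 1)) = ((j + m).choose m) * m := by
      have h := Nat.add_one_mul_choose_eq (j + m - 1) (m - 1)
      rwa [show j + m - 1 + 1 = j + m from by omega,
        show m - 1 + 1 = m from by omega] at h
    have h1q : ((j + m - 1).choose ν : ℚ) * ((j + m - ν - 1).choose (m - ν - 1))
        = ((m - 1).choose ν : ℚ) * ((j + m - 1).choose (m - 1)) := by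
      exact_mod_cast congrArg (Nat.cast : ℕ → ℚ) h1
    have h2q : ((j : ℚ) + m) * ((j + m - 1).choose (m - 1))
        = ((j + m).choose m : ℚ) * m := by
      have := congrArg (Nat.cast : ℕ → ℚ) h2
      push_cast at this
      convert this using 2
    simp only [ee]
    push_cast
    linear_combination ((-1 : ℚ) ^ (j + m) * (m.choose j) * ((j : ℚ) + m) * x ^ j) * h1q
      + ((-1 : ℚ) ^ (j + m) * (m.choose j) * ((m - 1).choose ν : ℚ) * x ^ j) * h2q
  rw [Finset.sum_congr rfl hLterm, Finset.sum_congr rfl hRterm, ← Finset.mul_sum, hkeyx,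
    ← Finset.mul_sum]
  ring
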